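/- Bound on the second-order perturbation-theory transition amplitude: let t_i < t_f, let ψ_in, ψ_fin, (ψ_k)_{k∈ℕ} be measurable functions ℝⁿ → ℂ, E_in, E_fin ∈ ℝ, 0 < ε < 1, c_in, c_fin, (c_k) nonnegative constants, ρ_in, ρ_fin, (ρ_k) measurable real functions with |ψ_in| ≤ c_in·e^{−(1−ε)ρ_in}, |ψ_fin| ≤ c_fin·e^{−(1−ε)ρ_fin}, |ψ_k| ≤ c_k·e^{−(1−ε)ρ_k}, and sup_k c_k < ∞, and let V : ℝⁿ → ℝ be measurable. Suppose the kernel K(x',t'|x,t) satisfies the pointwise bound |K(x',t'|x,t)| ≤ Σ_k |ψ_k(x')|·|ψ_k(x)|, and set B_{fin,k} = ∫|V|·e^{−(1−ε)(ρ_fin+ρ_k)} dx and B_{k,in} = ∫|V|·e^{−(1−ε)(ρ_k+ρ_in)} dx, with Σ_k c_k²·B_{fin,k}·B_{k,in} < ∞ and all relevant integrals existing. Then the amplitude A^{(2)} = −∫_{t_i}^{t_f} dt ∫_t^{t_f} dt' ∫∫ conj(ψ_fin(x'))·e^{−iE_fin(t_f−t')}·V(x')·K(x',t'|x,t)·V(x)·ψ_in(x)·e^{−iE_in(t−t_i)}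 dx dx' satisfies |A^{(2)}| ≤ ((t_f − t_i)²/2)·c_in·c_fin·Σ_k c_k²·B_{fin,k}·B_{k,in}. -/

import Mathlib

open MeasureTheory


private lemma ofReal_tsum_le' {f : ℕ → ℝ} (hf : ∀ k, 0 ≤ f k) :
    ENNReal.ofReal (∑' k, f k) ≤ ∑' k, ENNReal.ofReal (f k) := by
  by_cases h : Summable f
  · rw [ENNReal.ofReal_tsum_of_nonneg hf h]
  · rw [tsum_eq_zero_of_not_summable h]; simp


/-- Eqs. (A5)–(A7) of the paper: bound on the second-order
time-dependent perturbation-theory transition amplitude.  With Agmon upper bounds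
`|ψ_in| ≤ c_in e^{−(1−ε)ρ_in}`, `|ψ_fin| ≤ c_fin e^{−(1−ε)ρ_fin}`,
`|ψ_k| ≤ c_k e^{−(1−ε)ρ_k}`, `sup_k c_k < ∞`, the kernel bound
`|K(x',t'|x,t)| ≤ Σ_k |ψ_k(x')||ψ_k(x)|`, and
`B_{fin,k} = ∫ |V| e^{−(1−ε)(ρ_fin+ρ_k)}`, `B_{k,in} = ∫ |V| e^{−(1−ε)(ρ_k+ρ_in)}`,
the second-order amplitude `A²` satisfies
`|A²| ≤ ((t_f−t_i)²/2) c_in c_fin Σ_k c_k² B_{fin,k} B_{k,in}`. -/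
theorem second_order_amplitude_bound
    (n : ℕ) (ti tf : ℝ) (hti : ti < tf)
    (ψin ψfin : EuclideanSpace ℝ (Fin n) → ℂ)
    (ψ : ℕ → EuclideanSpace ℝ (Fin n) → ℂ)
    (Ein Efin : ℝ) (ε : ℝ) (hε : 0 < ε) (hε1 : ε < 1)
    (cin cfin : ℝ) (hcin : 0 ≤ cin) (hcfin : 0 ≤ cfin)
    (c : ℕ → ℝ) (hc : ∀ k, 0 ≤ c k) (hcsup : BddAbove (Set.range c))
    (ρin ρfin : EuclideanSpace ℝ (Fin n) → ℝ)
    (ρ : ℕ → EuclideanSpace ℝ (Fin n) → ℝ)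
    (hψinm : Measurable ψin) (hψfinm : Measurable ψfin) (hψm : ∀ k, Measurable (ψ k))
    (hρinm : Measurable ρin) (hρfinm : Measurable ρfin) (hρm : ∀ k, Measurable (ρ k))
    (V : EuclideanSpace ℝ (Fin n) → ℝ) (hVm : Measurable V)
    (hbin : ∀ x, ‖ψin x‖ ≤ cin * Real.exp (-(1 - ε) * ρin x))
    (hbfin : ∀ x, ‖ψfin x‖ ≤ cfin * Real.exp (-(1 - ε) * ρfin x))
    (hbound : ∀ k x, ‖ψ k x‖ ≤ c k * Real.exp (-(1 - ε) * ρ k x))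
    (K : EuclideanSpace ℝ (Fin n) → ℝ → EuclideanSpace ℝ (Fin n) → ℝ → ℂ)
    (hK : ∀ x' t' x t, ‖K x' t' x t‖ ≤ ∑' k : ℕ, ‖ψ k x'‖ * ‖ψ k x‖)
    (Bfin Bin : ℕ → ℝ)
    (hBfin : ∀ k, Bfin k = ∫ x, |V x| * Real.exp (-(1 - ε) * (ρfin x + ρ k x)))
    (hBin : ∀ k, Bin k = ∫ x, |V x| * Real.exp (-(1 - ε) * (ρ k x + ρin x)))
    (hBfinInt : ∀ k,
      Integrable (fun x => |V x| * Real.exp (-(1 - ε) * (ρfin x + ρ k x))))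
    (hBinInt : ∀ k,
      Integrable (fun x => |V x| * Real.exp (-(1 - ε) * (ρ k x + ρin x))))
    (hsum : Summable (fun k : ℕ => c k ^ 2 * Bfin k * Bin k))
    (hKint : ∀ t t' : ℝ, Integrable (fun q : EuclideanSpace ℝ (Fin n) × EuclideanSpace ℝ (Fin n) =>
      (starRingEnd ℂ) (ψfin q.1) * Complex.exp (-Complex.I * (Efin : ℂ) * ((tf - t' : ℝ) : ℂ)) *
        (V q.1 : ℂ) * K q.1 t' q.2 t * (V q.2 : ℂ) * ψin q.2 *
        Complex.exp (-Complex.I * (Ein : ℂ) * ((t - ti : ℝ) : ℂ))))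
    (A2 : ℂ)
    (hA2 : A2 = -∫ t in ti..tf, ∫ t' in t..tf,
      ∫ q : EuclideanSpace ℝ (Fin n) × EuclideanSpace ℝ (Fin n),
        (starRingEnd ℂ) (ψfin q.1) * Complex.exp (-Complex.I * (Efin : ℂ) * ((tf - t' : ℝ) : ℂ)) *
          (V q.1 : ℂ) * K q.1 t' q.2 t * (V q.2 : ℂ) * ψin q.2 *
          Complex.exp (-Complex.I * (Ein : ℂ) * ((t - ti : ℝ) : ℂ))) :
    ‖A2‖ ≤ (tf - ti) ^ 2 / 2 * cin * cfin * ∑' k : ℕ, c k ^ 2 * Bfin k * Bin k := by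
  classical
  set S := ∑' k : ℕ, c k ^ 2 * Bfin k * Bin k with hSdef
  have hBfin0 : ∀ k, 0 ≤ Bfin k := fun k => (hBfin k) ▸
    integral_nonneg (fun x => by positivity)
  have hBin0 : ∀ k, 0 ≤ Bin k := fun k => (hBin k) ▸
    integral_nonneg (fun x => by positivity)
  have hterm0 : ∀ k, 0 ≤ c k ^ 2 * Bfin k * Bin k := fun k =>
    mul_nonneg (mul_nonneg (sq_nonneg _) (hBfin0 k)) (hBin0 k)
  have hS0 : 0 ≤ S := tsum_nonneg hterm0
  set M := cin * cfin * S with hMdef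
  have hM0 : 0 ≤ M := by positivity
  -- the dominating functions
  set ak : ℕ → EuclideanSpace ℝ (Fin n) → ℝ := fun k x => |V x| * Real.exp (-(1 - ε) * (ρfin x + ρ k x)) with hak
  set bk : ℕ → EuclideanSpace ℝ (Fin n) → ℝ := fun k x => |V x| * Real.exp (-(1 - ε) * (ρ k x + ρin x)) with hbk
  have hakm : ∀ k, Measurable (ak k) := fun k =>
    (hVm.abs).mul (((hρfinm.add (hρm k)).const_mul (-(1-ε))).exp)
  have hbkm : ∀ k, Measurable (bk k) := fun k =>
    (hVm.abs).mul ((((hρm k).add hρinm).const_mul (-(1-ε))).exp)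
  have hak0 : ∀ k x, 0 ≤ ak k x := fun k x => by positivity
  have hbk0 : ∀ k x, 0 ≤ bk k x := fun k x => by positivity
  -- inner bound
  have hinner : ∀ t t' : ℝ,
      ‖∫ q : EuclideanSpace ℝ (Fin n) × EuclideanSpace ℝ (Fin n),
        (starRingEnd ℂ) (ψfin q.1) * Complex.exp (-Complex.I * (Efin : ℂ) * ((tf - t' : ℝ) : ℂ)) *
          (V q.1 : ℂ) * K q.1 t' q.2 t * (V q.2 : ℂ) * ψin q.2 *
          Complex.exp (-Complex.I * (Ein : ℂ) * ((t - ti : ℝ) : ℂ))‖ ≤ M := by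
    intro t t'
    set f : EuclideanSpace ℝ (Fin n) × EuclideanSpace ℝ (Fin n) → ℂ := fun q =>
      (starRingEnd ℂ) (ψfin q.1) * Complex.exp (-Complex.I * (Efin : ℂ) * ((tf - t' : ℝ) : ℂ)) *
        (V q.1 : ℂ) * K q.1 t' q.2 t * (V q.2 : ℂ) * ψin q.2 *
        Complex.exp (-Complex.I * (Ein : ℂ) * ((t - ti : ℝ) : ℂ)) with hf
    set G : ℕ → EuclideanSpace ℝ (Fin n) × EuclideanSpace ℝ (Fin n) → ENNReal := fun k q =>
      ENNReal.ofReal (cfin * c k * ak k q.1) * ENNReal.ofReal (c k * cin * bk k q.2) with hG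
    have hpt : ∀ q : EuclideanSpace ℝ (Fin n) × EuclideanSpace ℝ (Fin n), ENNReal.ofReal ‖f q‖ ≤ ∑' k, G k q := by
      intro q
      have hexp1 : ‖Complex.exp (-Complex.I * (Efin : ℂ) * ((tf - t' : ℝ) : ℂ))‖ = 1 := by
        simp [Complex.norm_exp]
      have hexp2 : ‖Complex.exp (-Complex.I * (Ein : ℂ) * ((t - ti : ℝ) : ℂ))‖ = 1 := by
        simp [Complex.norm_exp]
      have h1 : ‖f q‖ = (‖ψfin q.1‖ * |V q.1|) * ‖K q.1 t' q.2 t‖ *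
          (|V q.2| * ‖ψin q.2‖) := by
        rw [hf]
        simp only [norm_mul, hexp1, hexp2]
        simp only [Complex.norm_conj, Complex.norm_real, Real.norm_eq_abs]
        ring
      rw [h1, ENNReal.ofReal_mul (by positivity), ENNReal.ofReal_mul (by positivity)]
      calc ENNReal.ofReal (‖ψfin q.1‖ * |V q.1|) * ENNReal.ofReal ‖K q.1 t' q.2 t‖ *
            ENNReal.ofReal (|V q.2| * ‖ψin q.2‖)
          ≤ ENNReal.ofReal (cfin * Real.exp (-(1 - ε) * ρfin q.1) * |V q.1|) *
              (∑' k, ENNReal.ofReal (c k * Real.exp (-(1 - ε) * ρ k q.1)) *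
                ENNReal.ofReal (c k * Real.exp (-(1 - ε) * ρ k q.2))) *
              ENNReal.ofReal (|V q.2| * (cin * Real.exp (-(1 - ε) * ρin q.2))) := by
            gcongr
            · exact hbfin q.1
            · calc ENNReal.ofReal ‖K q.1 t' q.2 t‖
                  ≤ ENNReal.ofReal (∑' k, ‖ψ k q.1‖ * ‖ψ k q.2‖) :=
                    ENNReal.ofReal_le_ofReal (hK q.1 t' q.2 t)
                _ ≤ ∑' k, ENNReal.ofReal (‖ψ k q.1‖ * ‖ψ k q.2‖) :=
                    ofReal_tsum_le' (fun k => mul_nonneg (norm_nonneg _) (norm_nonneg _))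
                _ ≤ ∑' k, ENNReal.ofReal (c k * Real.exp (-(1 - ε) * ρ k q.1)) *
                      ENNReal.ofReal (c k * Real.exp (-(1 - ε) * ρ k q.2)) := by
                    refine ENNReal.tsum_le_tsum (fun k => ?_)
                    rw [ENNReal.ofReal_mul (norm_nonneg _)]
                    gcongr
                    · exact hbound k q.1
                    · exact hbound k q.2
            · exact hbin q.2
        _ = ∑' k, G k q := by
            rw [← ENNReal.tsum_mul_left, ← ENNReal.tsum_mul_right]
            refine tsum_congr (fun k => ?_)
            simp only [hG]
            have e1 : Real.exp (-(1 - ε) * (ρfin q.1 + ρ k q.1)) =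
                Real.exp (-(1 - ε) * ρfin q.1) * Real.exp (-(1 - ε) * ρ k q.1) := by
              rw [← Real.exp_add]; ring_nf
            have e2 : Real.exp (-(1 - ε) * (ρ k q.2 + ρin q.2)) =
                Real.exp (-(1 - ε) * ρ k q.2) * Real.exp (-(1 - ε) * ρin q.2) := by
              rw [← Real.exp_add]; ring_nf
            have r1 : cfin * c k * ak k q.1 =
                (cfin * Real.exp (-(1 - ε) * ρfin q.1) * |V q.1|) *
                  (c k * Real.exp (-(1 - ε) * ρ k q.1)) := by
              simp only [hak]; rw [e1]; ring
            have r2 : c k * cin * bk k q.2 =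
                (c k * Real.exp (-(1 - ε) * ρ k q.2)) *
                  (|V q.2| * (cin * Real.exp (-(1 - ε) * ρin q.2))) := by
              simp only [hbk]; rw [e2]; ring
            have hP' : (0:ℝ) ≤ cfin * Real.exp (-(1 - ε) * ρfin q.1) * |V q.1| :=
              mul_nonneg (mul_nonneg hcfin (Real.exp_nonneg _)) (abs_nonneg _)
            have hY : (0:ℝ) ≤ c k * Real.exp (-(1 - ε) * ρ k q.2) :=
              mul_nonneg (hc k) (Real.exp_nonneg _)
            rw [show ∀ a b c d : ENNReal, a * (b * c) * d = (a * b) * (c * d) from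
              fun a b c d => by ring]
            rw [← ENNReal.ofReal_mul hP', ← ENNReal.ofReal_mul hY, r1, r2]
    have hGm : ∀ k, AEMeasurable (G k) (volume : Measure (EuclideanSpace ℝ (Fin n) × EuclideanSpace ℝ (Fin n))) := by
      intro k
      exact ((((hakm k).const_mul _).ennreal_ofReal.comp measurable_fst).mul
        (((hbkm k).const_mul _).ennreal_ofReal.comp measurable_snd)).aemeasurable
    have hlin : (∫⁻ q : EuclideanSpace ℝ (Fin n) × EuclideanSpace ℝ (Fin n), ENNReal.ofReal ‖f q‖) ≤ ENNReal.ofReal M := by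
      calc (∫⁻ q : EuclideanSpace ℝ (Fin n) × EuclideanSpace ℝ (Fin n), ENNReal.ofReal ‖f q‖)
          ≤ ∫⁻ q : EuclideanSpace ℝ (Fin n) × EuclideanSpace ℝ (Fin n), ∑' k, G k q := lintegral_mono hpt
        _ = ∑' k, ∫⁻ q : EuclideanSpace ℝ (Fin n) × EuclideanSpace ℝ (Fin n), G k q := lintegral_tsum hGm
        _ = ∑' k, ENNReal.ofReal (cin * cfin * (c k ^ 2 * Bfin k * Bin k)) := by
            refine tsum_congr (fun k => ?_)
            simp only [hG]
            rw [Measure.volume_eq_prod,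
              lintegral_prod_mul (((hakm k).const_mul _).ennreal_ofReal.aemeasurable)
                (((hbkm k).const_mul _).ennreal_ofReal.aemeasurable)]
            have l1 : (∫⁻ x : EuclideanSpace ℝ (Fin n), ENNReal.ofReal (cfin * c k * ak k x)) =
                ENNReal.ofReal (cfin * c k) * ENNReal.ofReal (Bfin k) := by
              simp_rw [ENNReal.ofReal_mul (mul_nonneg hcfin (hc k))]
              rw [lintegral_const_mul' _ _ ENNReal.ofReal_ne_top,
                ← ofReal_integral_eq_lintegral_ofReal (hBfinInt k)
                  (ae_of_all _ (fun x => by positivity)), ← hBfin k]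
            have l2 : (∫⁻ x : EuclideanSpace ℝ (Fin n), ENNReal.ofReal (c k * cin * bk k x)) =
                ENNReal.ofReal (c k * cin) * ENNReal.ofReal (Bin k) := by
              simp_rw [ENNReal.ofReal_mul (mul_nonneg (hc k) hcin)]
              rw [lintegral_const_mul' _ _ ENNReal.ofReal_ne_top,
                ← ofReal_integral_eq_lintegral_ofReal (hBinInt k)
                  (ae_of_all _ (fun x => by positivity)), ← hBin k]
            rw [l1, l2, ← ENNReal.ofReal_mul (mul_nonneg (hc k) hcin),
              ← ENNReal.ofReal_mul (mul_nonneg hcfin (hc k)),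
              ← ENNReal.ofReal_mul (mul_nonneg (mul_nonneg hcfin (hc k)) (hBfin0 k))]
            congr 1
            ring
        _ = ENNReal.ofReal (∑' k, cin * cfin * (c k ^ 2 * Bfin k * Bin k)) := by
            rw [ENNReal.ofReal_tsum_of_nonneg (fun k => mul_nonneg (mul_nonneg hcin hcfin) (hterm0 k))
              (hsum.mul_left (cin * cfin))]
        _ = ENNReal.ofReal M := by rw [tsum_mul_left, hMdef, hSdef, mul_assoc]
    calc ‖∫ q : EuclideanSpace ℝ (Fin n) × EuclideanSpace ℝ (Fin n), f q‖ ≤ (∫⁻ q : EuclideanSpace ℝ (Fin n) × EuclideanSpace ℝ (Fin n), ENNReal.ofReal ‖f q‖).toReal :=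
          norm_integral_le_lintegral_norm f
      _ ≤ (ENNReal.ofReal M).toReal := ENNReal.toReal_mono ENNReal.ofReal_ne_top hlin
      _ = M := ENNReal.toReal_ofReal hM0
  -- outer (time) integrals
  have houter : ∀ t ∈ Set.uIoc ti tf,
      ‖∫ t' in t..tf, ∫ q : EuclideanSpace ℝ (Fin n) × EuclideanSpace ℝ (Fin n),
        (starRingEnd ℂ) (ψfin q.1) * Complex.exp (-Complex.I * (Efin : ℂ) * ((tf - t' : ℝ) : ℂ)) *
          (V q.1 : ℂ) * K q.1 t' q.2 t * (V q.2 : ℂ) * ψin q.2 *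
          Complex.exp (-Complex.I * (Ein : ℂ) * ((t - ti : ℝ) : ℂ))‖ ≤ M * (tf - t) := by
    intro t ht
    rw [Set.uIoc_of_le hti.le] at ht
    have h := intervalIntegral.norm_integral_le_of_norm_le_const
      (C := M) (a := t) (b := tf) (fun t' _ => hinner t t')
    rwa [abs_of_nonneg (sub_nonneg.2 ht.2)] at h
  rw [hA2, norm_neg]
  have hIb : IntervalIntegrable (fun t => M * (tf - t)) volume ti tf :=
    (continuous_const.mul (continuous_const.sub continuous_id)).intervalIntegrable ti tf
  have hle : ‖∫ t in ti..tf, ∫ t' in t..tf,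
      ∫ q : EuclideanSpace ℝ (Fin n) × EuclideanSpace ℝ (Fin n),
        (starRingEnd ℂ) (ψfin q.1) * Complex.exp (-Complex.I * (Efin : ℂ) * ((tf - t' : ℝ) : ℂ)) *
          (V q.1 : ℂ) * K q.1 t' q.2 t * (V q.2 : ℂ) * ψin q.2 *
          Complex.exp (-Complex.I * (Ein : ℂ) * ((t - ti : ℝ) : ℂ))‖ ≤
      |∫ t in ti..tf, M * (tf - t)| := by
    refine intervalIntegral.norm_integral_le_abs_of_norm_le ?_ hIb
    exact (ae_restrict_iff' measurableSet_uIoc).mpr (ae_of_all _ houter)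
  refine hle.trans ?_
  have hval : (∫ t in ti..tf, M * (tf - t)) = M * ((tf - ti) ^ 2 / 2) := by
    rw [intervalIntegral.integral_const_mul]
    have : (∫ t in ti..tf, (tf - t)) = (tf - ti) ^ 2 / 2 := by
      rw [show (∫ t in ti..tf, (tf - t)) = (∫ t in ti..tf, tf) - ∫ t in ti..tf, t from
          intervalIntegral.integral_sub intervalIntegrable_const
            (continuous_id.intervalIntegrable ti tf),
        intervalIntegral.integral_const, integral_id]
      simp only [smul_eq_mul]
      ring
    rw [this]
  rw [hval, abs_of_nonneg (by positivity)]
  rw [hMdef]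
  ring_nf
  exact le_refl _
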